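/- Let Σ be a real d×d matrix, let c : ℝ → ℝ and x : ℝ → ℝ^d be functions, and let b : ℝ → ℝ^d be differentiable with b(t)ᵀ Σ b(t) ≠ 0 for all t and derivative b'(t) = c(t) • (I − (b(t)ᵀΣb(t))⁻¹ Σ b(t) b(t)ᵀ) x(t). Then the Euclidean norm ‖b(t)‖ is constant in t: ‖b(t)‖ = ‖b(0)‖ for all t. (The norm of each neuron's weight vector does not change during gradient-flow training of the batch-normalized model.) -/

import Mathlib

open Matrix

/-- The Euclidean norm on `Fin d → ℝ`. -/
noncomputable def euclNorm {d : ℕ} (v : Fin d → ℝ) : ℝ := Real.sqrt (∑ i, v i ^ 2)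

lemma bn_dot_zero {d : ℕ} (S : Matrix (Fin d) (Fin d) ℝ) (ct : ℝ) (xt bt : Fin d → ℝ)
    (hne : bt ⬝ᵥ (S *ᵥ bt) ≠ 0) :
    bt ⬝ᵥ (ct • (((1 : Matrix (Fin d) (Fin d) ℝ)
      - (bt ⬝ᵥ (S *ᵥ bt))⁻¹ • (S * vecMulVec bt bt)) *ᵥ xt)) = 0 := by
  have h1 : (vecMulVec bt bt) *ᵥ xt = (bt ⬝ᵥ xt) • bt := by
    ext i
    simp [vecMulVec_apply, mulVec, dotProduct, Finset.mul_sum, mul_comm, mul_left_comm]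
  rw [dotProduct_smul, sub_mulVec, Matrix.smul_mulVec, ← mulVec_mulVec, h1]
  have h2 : bt ⬝ᵥ (S *ᵥ (bt ⬝ᵥ xt) • bt) = (bt ⬝ᵥ xt) * (bt ⬝ᵥ (S *ᵥ bt)) := by
    rw [mulVec_smul, dotProduct_smul, smul_eq_mul]
  rw [dotProduct_sub, dotProduct_smul, h2, one_mulVec, smul_eq_mul, smul_eq_mul]
  field_simp
  ring

/-- If `b : ℝ → ℝ^d` follows the batch-normalization gradient flow
`b'(t) = c(t) (I − (b(t)ᵀΣb(t))⁻¹ Σ b(t) b(t)ᵀ) x(t)` (with `b(t)ᵀΣb(t) ≠ 0`), then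
the Euclidean norm of `b(t)` is constant in `t`. -/
theorem bn_flow_norm_constant {d : ℕ}
    (S : Matrix (Fin d) (Fin d) ℝ) (c : ℝ → ℝ) (x : ℝ → Fin d → ℝ)
    (b : ℝ → Fin d → ℝ)
    (hne : ∀ t : ℝ, b t ⬝ᵥ (S *ᵥ b t) ≠ 0)
    (hderiv : ∀ t : ℝ, HasDerivAt b
      (c t • (((1 : Matrix (Fin d) (Fin d) ℝ)
        - (b t ⬝ᵥ (S *ᵥ b t))⁻¹ • (S * vecMulVec (b t) (b t))) *ᵥ x t)) t) :
    ∀ t : ℝ, euclNorm (b t) = euclNorm (b 0) := by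
  set v : ℝ → Fin d → ℝ := fun t => c t • (((1 : Matrix (Fin d) (Fin d) ℝ)
        - (b t ⬝ᵥ (S *ᵥ b t))⁻¹ • (S * vecMulVec (b t) (b t))) *ᵥ x t) with hv
  have hf : ∀ t : ℝ, HasDerivAt (fun s => ∑ i, b s i ^ 2) 0 t := by
    intro t
    have hcomp : ∀ i, HasDerivAt (fun s => b s i) (v t i) t :=
      fun i => (hasDerivAt_pi.mp (hderiv t)) i
    have hsum : HasDerivAt (fun s => ∑ i, b s i ^ 2)
        (∑ i, 2 * b t i * v t i) t := by
      have := HasDerivAt.fun_sum (u := Finset.univ) (fun i _ =>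
        ((hcomp i).pow 2 : HasDerivAt (fun s => b s i ^ 2)
          ((2 : ℕ) * b t i ^ (2 - 1) * v t i) t))
      simpa using this
    have hz : (∑ i, 2 * b t i * v t i) = 0 := by
      have : (∑ i, 2 * b t i * v t i) = 2 * (b t ⬝ᵥ v t) := by
        simp [dotProduct, Finset.mul_sum, mul_assoc]
      rw [this, hv, bn_dot_zero S (c t) (x t) (b t) (hne t), mul_zero]
    rwa [hz] at hsum
  have hconst : ∀ t : ℝ, (∑ i, b t i ^ 2) = ∑ i, b 0 i ^ 2 := by
    intro t
    have : (fun s => ∑ i, b s i ^ 2) t = (fun s => ∑ i, b s i ^ 2) 0 :=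
      is_const_of_deriv_eq_zero (fun s => (hf s).differentiableAt)
        (fun s => (hf s).deriv) t 0
    simpa using this
  intro t
  unfold euclNorm
  rw [hconst t]
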